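/- Let L, E : ℝ → Matrix (Fin 2) (Fin 2) ℝ be differentiable and satisfy E' + EL + LᵀE + (m-1)(tr L)E = 0 and L' + L² + f·P·L + c(t)·E = 0, where P = !![0,-1;1,0] and f ∈ ℝ. Define D(t) = exp((f t/2)·P), L̃ = D L D⁻¹ + (f/2)P, Ẽ = D E D⁻¹. Then Ẽ' + Ẽ L̃ + L̃ᵀ Ẽ + (m-1)(tr L̃)Ẽ = 0 and L̃' + L̃² + (f²/4)·I + c(t)·Ẽ = 0, provided E is symmetric. -/

import Mathlib

open Matrix

attribute [local instance] Matrix.linftyOpNormedAddCommGroup Matrix.linftyOpNormedRing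
  Matrix.linftyOpNormedAlgebra

namespace Stmt15Aux

noncomputable def entryCLM (i j : Fin 2) : Matrix (Fin 2) (Fin 2) ℝ →L[ℝ] ℝ :=
  LinearMap.toContinuousLinearMap
    { toFun := fun A => A i j
      map_add' := fun _ _ => rfl
      map_smul' := fun _ _ => rfl }

lemma hasDerivAt_entry {F : ℝ → Matrix (Fin 2) (Fin 2) ℝ} {F' : Matrix (Fin 2) (Fin 2) ℝ}
    {t : ℝ} (h : HasDerivAt F F' t) (i j : Fin 2) :
    HasDerivAt (fun s => F s i j) (F' i j) t := by
  have := (entryCLM i j).hasFDerivAt.comp_hasDerivAt t h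
  exact this

lemma hasDerivAt_matrix {F : ℝ → Matrix (Fin 2) (Fin 2) ℝ} {F' : Matrix (Fin 2) (Fin 2) ℝ}
    {t : ℝ} (h : ∀ i j, HasDerivAt (fun s => F s i j) (F' i j) t) :
    HasDerivAt F F' t := by
  have hF : F = fun s => ∑ i : Fin 2, ∑ j : Fin 2, F s i j • single i j (1 : ℝ) := by
    funext s
    conv_lhs => rw [matrix_eq_sum_single (F s)]
    simp [smul_single]
  have hF' : F' = ∑ i : Fin 2, ∑ j : Fin 2, F' i j • single i j (1 : ℝ) := by
    conv_lhs => rw [matrix_eq_sum_single F']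
    simp [smul_single]
  rw [hF, hF']
  exact HasDerivAt.fun_sum fun i _ => HasDerivAt.fun_sum fun j _ => (h i j).smul_const (single i j (1 : ℝ))

end Stmt15Aux

open Stmt15Aux in
/-- the gauge transformation D(t) = exp((ft/2)P),
L̃ = D L D⁻¹ + (f/2)P, Ẽ = D E D⁻¹ removes the Coriolis term, yielding
(5.6.8)–(5.6.9). -/
theorem stmt15 (m f : ℝ) (c : ℝ → ℝ) (hc : Continuous c)
    (P : Matrix (Fin 2) (Fin 2) ℝ) (hP : P = !![0, -1; 1, 0])
    (L E : ℝ → Matrix (Fin 2) (Fin 2) ℝ)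
    (hEsymm : ∀ t, (E t)ᵀ = E t)
    (hE : ∀ t i j, HasDerivAt (fun s => E s i j)
      ((-(E t * L t + (L t)ᵀ * E t + ((m - 1) * Matrix.trace (L t)) • E t)) i j) t)
    (hL : ∀ t i j, HasDerivAt (fun s => L s i j)
      ((-(L t * L t + f • (P * L t) + c t • E t)) i j) t)
    (D Ltil Etil : ℝ → Matrix (Fin 2) (Fin 2) ℝ)
    (hD : ∀ t, D t = NormedSpace.exp ((f * t / 2) • P))
    (hLtil : ∀ t, Ltil t = D t * L t * (D t)⁻¹ + (f / 2) • P)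
    (hEtil : ∀ t, Etil t = D t * E t * (D t)⁻¹) :
    (∀ t i j, HasDerivAt (fun s => Etil s i j)
      ((-(Etil t * Ltil t + (Ltil t)ᵀ * Etil t
        + ((m - 1) * Matrix.trace (Ltil t)) • Etil t)) i j) t) ∧
    (∀ t i j, HasDerivAt (fun s => Ltil s i j)
      ((-(Ltil t * Ltil t + (f ^ 2 / 4) • (1 : Matrix (Fin 2) (Fin 2) ℝ)
        + c t • Etil t)) i j) t) := by
  -- basic facts about P
  have hP2 : P * P = -1 := by
    subst hP
    ext i j
    fin_cases i <;> fin_cases j <;> simp [Matrix.mul_apply, Fin.sum_univ_two]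
  have hPt : Pᵀ = -P := by
    subst hP
    ext i j
    fin_cases i <;> fin_cases j <;> simp
  have htrP : Matrix.trace P = 0 := by
    subst hP; simp [Matrix.trace, Fin.sum_univ_two]
  -- the inverse of D
  set Di : ℝ → Matrix (Fin 2) (Fin 2) ℝ :=
    fun t => NormedSpace.exp (-((f * t / 2) • P)) with hDi
  have hDDi : ∀ t, D t * Di t = 1 := by
    intro t
    rw [hD]
    show NormedSpace.exp ((f * t / 2) • P) * NormedSpace.exp (-((f * t / 2) • P)) = 1
    rw [← Matrix.exp_add_of_commute ((f * t / 2) • P) (-((f * t / 2) • P))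
      ((Commute.refl _).neg_right), add_neg_cancel, NormedSpace.exp_zero]
  have hDiD : ∀ t, Di t * D t = 1 := by
    intro t
    rw [hD]
    show NormedSpace.exp (-((f * t / 2) • P)) * NormedSpace.exp ((f * t / 2) • P) = 1
    rw [← Matrix.exp_add_of_commute (-((f * t / 2) • P)) ((f * t / 2) • P)
      ((Commute.refl _).neg_left), neg_add_cancel, NormedSpace.exp_zero]
  have hinv : ∀ t, (D t)⁻¹ = Di t := fun t => Matrix.inv_eq_right_inv (hDDi t)
  have hPD : ∀ t, P * D t = D t * P := by
    intro t
    rw [hD]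
    exact (((Commute.refl P).smul_right (f * t / 2)).exp_right)
  have hPDi : ∀ t, P * Di t = Di t * P := by
    intro t
    rw [hDi]
    exact ((((Commute.refl P).smul_right (f * t / 2)).neg_right).exp_right)
  have hDt : ∀ t, (D t)ᵀ = Di t := by
    intro t
    rw [hD]
    show (NormedSpace.exp ((f * t / 2) • P))ᵀ = NormedSpace.exp (-((f * t / 2) • P))
    rw [← Matrix.exp_transpose, transpose_smul, hPt, smul_neg]
  have hDit : ∀ t, (Di t)ᵀ = D t := by
    intro t
    rw [hD]
    show (NormedSpace.exp (-((f * t / 2) • P)))ᵀ = NormedSpace.exp ((f * t / 2) • P)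
    rw [← Matrix.exp_transpose, transpose_neg, transpose_smul, hPt, smul_neg, neg_neg]
  -- derivatives of D and Di
  have harg : ∀ t : ℝ, (f * t / 2) • P = t • ((f / 2) • P) := by
    intro t
    rw [smul_smul]
    congr 1
    ring
  have hD' : ∀ t, HasDerivAt D ((f / 2) • (P * D t)) t := by
    intro t
    have h3 : HasDerivAt (fun s : ℝ => NormedSpace.exp (s • ((f / 2) • P)))
        ((f / 2) • (P * D t)) t := by
      have h2 := hasDerivAt_exp_smul_const' ((f / 2) • P) t
      rw [hD, ← smul_mul_assoc, harg]
      exact h2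
    exact h3.congr_of_eventuallyEq (Filter.Eventually.of_forall fun s => by
      rw [hD, harg])
  have harg2 : ∀ t : ℝ, -((f * t / 2) • P) = t • (-((f / 2) • P)) := by
    intro t
    rw [smul_neg, ← harg]
  have hDi' : ∀ t, HasDerivAt Di (-((f / 2) • (P * Di t))) t := by
    intro t
    have h3 : HasDerivAt (fun s : ℝ => NormedSpace.exp (s • (-((f / 2) • P))))
        (-((f / 2) • (P * Di t))) t := by
      have h2 := hasDerivAt_exp_smul_const' (-((f / 2) • P)) t
      show HasDerivAt _ (-((f / 2) • (P * NormedSpace.exp (-((f * t / 2) • P))))) t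
      rw [harg2, ← smul_mul_assoc, ← neg_mul]
      exact h2
    exact h3.congr_of_eventuallyEq (Filter.Eventually.of_forall fun s =>
      congrArg (NormedSpace.exp) (harg2 s))
  -- matrix-level derivative hypotheses
  have hE' : ∀ t, HasDerivAt E
      (-(E t * L t + (L t)ᵀ * E t + ((m - 1) * Matrix.trace (L t)) • E t)) t :=
    fun t => hasDerivAt_matrix (hE t)
  have hL' : ∀ t, HasDerivAt L
      (-(L t * L t + f • (P * L t) + c t • E t)) t :=
    fun t => hasDerivAt_matrix (hL t)
  -- trace of Ltil
  have htr : ∀ t, Matrix.trace (Ltil t) = Matrix.trace (L t) := by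
    intro t
    rw [hLtil, hinv, trace_add, trace_smul, htrP, smul_zero, add_zero,
      Matrix.trace_mul_cycle, hDiD, one_mul]
  constructor
  · intro t i j
    have hfun : (fun s => Etil s i j) = fun s => (D s * E s * Di s) i j := by
      funext s; rw [hEtil, hinv]
    rw [hfun]
    have hder : HasDerivAt (fun s => D s * E s * Di s)
        (((f / 2) • (P * D t) * E t
            + D t * -(E t * L t + (L t)ᵀ * E t + ((m - 1) * Matrix.trace (L t)) • E t)) * Di t
          + D t * E t * -((f / 2) • (P * Di t))) t :=
      (((hD' t).mul (hE' t)).mul (hDi' t))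
    have heq : ((f / 2) • (P * D t) * E t
            + D t * -(E t * L t + (L t)ᵀ * E t + ((m - 1) * Matrix.trace (L t)) • E t)) * Di t
          + D t * E t * -((f / 2) • (P * Di t))
        = -(Etil t * Ltil t + (Ltil t)ᵀ * Etil t
            + ((m - 1) * Matrix.trace (Ltil t)) • Etil t) := by
      have hcanc : ∀ X : Matrix (Fin 2) (Fin 2) ℝ, Di t * (D t * X) = X := by
        intro X; rw [← mul_assoc, hDiD, one_mul]
      rw [htr, hEtil, hLtil, hinv]
      rw [transpose_add, transpose_smul, hPt, transpose_mul, transpose_mul, hDit, hDt]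
      simp only [mul_add, add_mul, mul_neg, neg_mul, Matrix.mul_smul, Matrix.smul_mul,
        mul_assoc, hcanc, smul_neg, neg_add, smul_smul, smul_add]
      rw [← hPDi t]
      simp only [← mul_assoc]
      module
    exact heq ▸ hasDerivAt_entry hder i j
  · intro t i j
    have hfun : (fun s => Ltil s i j) = fun s => (D s * L s * Di s + (f / 2) • P) i j := by
      funext s; rw [hLtil, hinv]
    rw [hfun]
    have hder : HasDerivAt (fun s => D s * L s * Di s + (f / 2) • P)
        (((f / 2) • (P * D t) * L t
            + D t * -(L t * L t + f • (P * L t) + c t • E t)) * Di t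
          + D t * L t * -((f / 2) • (P * Di t))) t :=
      ((((hD' t).mul (hL' t)).mul (hDi' t)).add_const _)
    have heq : ((f / 2) • (P * D t) * L t
            + D t * -(L t * L t + f • (P * L t) + c t • E t)) * Di t
          + D t * L t * -((f / 2) • (P * Di t))
        = -(Ltil t * Ltil t + (f ^ 2 / 4) • (1 : Matrix (Fin 2) (Fin 2) ℝ)
            + c t • Etil t) := by
      have hcanc : ∀ X : Matrix (Fin 2) (Fin 2) ℝ, Di t * (D t * X) = X := by
        intro X; rw [← mul_assoc, hDiD, one_mul]
      rw [hEtil, hLtil, hinv]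
      simp only [mul_add, add_mul, mul_neg, neg_mul, Matrix.mul_smul, Matrix.smul_mul,
        mul_assoc, hcanc, smul_neg, neg_add, smul_smul, smul_add]
      rw [← hPDi t]
      simp only [← mul_assoc]
      rw [← hPD t, show P * P = -1 from hP2]
      have h44 : f ^ 2 / 4 = f / 2 * (f / 2) := by ring
      rw [h44]
      module
    exact heq ▸ hasDerivAt_entry hder i j
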